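/- The affine curve in ℂ³ defined by the ideal (Y² + XZ, X³ + YZ, Z² - X²Y, X⁴ - Y³) is the image of the parametrization t ↦ (X,Y,Z) = (t³, t⁴, -t⁵): every point of this parametrized curve satisfies all four equations, and conversely every point of the variety with X ≠ 0 lies on the parametrized curve. -/

import Mathlib

/-- The affine curve `(Y²+XZ, X³+YZ, Z²-X²Y, X⁴-Y³) = 0` in `ℂ³` is the image of
`t ↦ (t³, t⁴, -t⁵)`: every point of the parametrized curve satisfies the four
equations, and every point of the variety with `X ≠ 0` is on the parametrized
curve. -/
theorem stmt17 :
    (∀ t : ℂ,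
      (t ^ 4) ^ 2 + t ^ 3 * (-(t ^ 5)) = 0 ∧
      (t ^ 3) ^ 3 + t ^ 4 * (-(t ^ 5)) = 0 ∧
      (-(t ^ 5)) ^ 2 - (t ^ 3) ^ 2 * t ^ 4 = 0 ∧
      (t ^ 3) ^ 4 - (t ^ 4) ^ 3 = 0) ∧
    (∀ X Y Z : ℂ,
      Y ^ 2 + X * Z = 0 → X ^ 3 + Y * Z = 0 → Z ^ 2 - X ^ 2 * Y = 0 →
      X ^ 4 - Y ^ 3 = 0 → X ≠ 0 →
      ∃ t : ℂ, X = t ^ 3 ∧ Y = t ^ 4 ∧ Z = -(t ^ 5)) := by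
  constructor
  · intro t; refine ⟨by ring, by ring, by ring, by ring⟩
  · intro X Y Z h1 _h2 _h3 h4 hX
    have hY : Y ≠ 0 := by
      intro hY
      apply hX
      have : X ^ 4 = 0 := by rw [sub_eq_zero] at h4; simp [h4, hY]
      exact pow_eq_zero_iff (by norm_num) |>.mp this
    have h4' : X ^ 4 = Y ^ 3 := by linear_combination h4
    have hZ : Z = -Y ^ 2 / X := by field_simp; linear_combination h1
    refine ⟨Y / X, ?_, ?_, ?_⟩
    · field_simp
      linear_combination h4'
    · field_simp
      linear_combination h4'
    · rw [hZ]
      field_simp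
      ring_nf
      linear_combination -h4'
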